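/- arXiv:2308.06690 — 4 statements merged into one kernel-verified Lean document; each statement's English description precedes it below -/
import Mathlib

section
/- Let a, b be complex sequences of length L and x, y complex sequences of length N. Define four L×N complex arrays by X₁[i,j] = a_i·x_j, X₂[i,j] = b_i·y_j, X₃[i,j] = −a_i·conj(y_{N-1-j}), and X₄[i,j] = b_i·conj(x_{N-1-j}). Then for all integer shifts τ₁, τ₂ with |τ₁| < L and |τ₂| < N, the sum of the 2D aperiodic autocorrelations factors as ρ_{X₁}(τ₁,τ₂) + ρ_{X₂}(τ₁,τ₂) + ρ_{X₃}(τ₁,τ₂) + ρ_{X₄}(τ₁,τ₂) = (ρ_a(τ₁) + ρ_b(τ₁)) · (ρ_x(τ₂) + ρ_y(τ₂)). -/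
open Finset

noncomputable section

/-- 1D aperiodic autocorrelation of a length-`N` complex sequence at integer shift `τ`:
`ρ_x(τ) = Σ x_j * conj (x_{j+τ})`, summed over all `j` with `j` and `j + τ` in `[0, N)`. -/
def acorr (N : ℕ) (x : ℕ → ℂ) (τ : ℤ) : ℂ :=
  ∑ j ∈ Finset.range N,
    if 0 ≤ (j : ℤ) + τ ∧ (j : ℤ) + τ < (N : ℤ) then
      x j * star (x ((j : ℤ) + τ).toNat)
    else 0

/-- 2D aperiodic autocorrelation of an `N₁ × N₂` complex array at integer shifts `(τ₁, τ₂)`. -/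
def acorr2 (N₁ N₂ : ℕ) (X : ℕ → ℕ → ℂ) (τ₁ τ₂ : ℤ) : ℂ :=
  ∑ i ∈ Finset.range N₁, ∑ j ∈ Finset.range N₂,
    if (0 ≤ (i : ℤ) + τ₁ ∧ (i : ℤ) + τ₁ < (N₁ : ℤ)) ∧
       (0 ≤ (j : ℤ) + τ₂ ∧ (j : ℤ) + τ₂ < (N₂ : ℤ)) then
      X i j * star (X ((i : ℤ) + τ₁).toNat ((j : ℤ) + τ₂).toNat)
    else 0

/-- Peak-to-mean envelope power ratio of a length-`L` complex sequence:
`sup_{t ∈ [0,1]} (1/L) * |Σ_{i<L} c_i exp(2π√-1 i t)|²`. -/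
def pmepr (L : ℕ) (c : ℕ → ℂ) : ℝ :=
  ⨆ t : Set.Icc (0 : ℝ) 1,
    (‖∑ i ∈ Finset.range L,
      c i * Complex.exp (2 * Real.pi * Complex.I * (i : ℂ) * ((t : ℝ) : ℂ))‖) ^ 2 / L


lemma acorr2_prod (L N : ℕ) (u v : ℕ → ℂ) (τ₁ τ₂ : ℤ) :
    acorr2 L N (fun i j => u i * v j) τ₁ τ₂ = acorr L u τ₁ * acorr N v τ₂ := by
  unfold acorr2 acorr
  rw [Finset.sum_mul_sum]
  refine Finset.sum_congr rfl fun i _ => Finset.sum_congr rfl fun j _ => ?_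
  by_cases h1 : 0 ≤ (i : ℤ) + τ₁ ∧ (i : ℤ) + τ₁ < (L : ℤ) <;>
    by_cases h2 : 0 ≤ (j : ℤ) + τ₂ ∧ (j : ℤ) + τ₂ < (N : ℤ) <;>
    simp [h1, h2, star_mul'] <;> ring

lemma acorr_neg (N : ℕ) (w : ℕ → ℂ) (τ : ℤ) :
    acorr N (fun j => -(w j)) τ = acorr N w τ := by
  unfold acorr
  refine Finset.sum_congr rfl fun j _ => ?_
  split <;> simp

lemma acorr_rev (N : ℕ) (y : ℕ → ℂ) (τ : ℤ) (hτ : |τ| < (N : ℤ)) :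
    acorr N (fun j => star (y (N - 1 - j))) τ = acorr N y τ := by
  have hN : 0 < N := by
    have := abs_nonneg τ
    omega
  unfold acorr
  rw [← Finset.sum_filter, ← Finset.sum_filter]
  refine Finset.sum_nbij' (fun j => N - 1 - ((j : ℤ) + τ).toNat)
    (fun j => N - 1 - ((j : ℤ) + τ).toNat) ?_ ?_ ?_ ?_ ?_
  · intro i hi
    simp only [Finset.mem_filter, Finset.mem_range] at hi ⊢
    omega
  · intro i hi
    simp only [Finset.mem_filter, Finset.mem_range] at hi ⊢
    omega
  · intro i hi
    simp only [Finset.mem_filter, Finset.mem_range] at hi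
    omega
  · intro i hi
    simp only [Finset.mem_filter, Finset.mem_range] at hi
    omega
  · intro i hi
    simp only [Finset.mem_filter, Finset.mem_range] at hi
    have h1 : (((N - 1 - ((i : ℤ) + τ).toNat : ℕ) : ℤ) + τ).toNat = N - 1 - i := by omega
    dsimp only
    rw [h1]
    simp [mul_comm]

/-- the sum of the four 2D autocorrelations factors as
`(ρ_a(τ₁) + ρ_b(τ₁)) * (ρ_x(τ₂) + ρ_y(τ₂))`. -/
theorem stmt_2 (L N : ℕ) (a b x y : ℕ → ℂ) (τ₁ τ₂ : ℤ)
    (h₁ : |τ₁| < (L : ℤ)) (h₂ : |τ₂| < (N : ℤ)) :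
    acorr2 L N (fun i j => a i * x j) τ₁ τ₂ +
      acorr2 L N (fun i j => b i * y j) τ₁ τ₂ +
      acorr2 L N (fun i j => -(a i * star (y (N - 1 - j)))) τ₁ τ₂ +
      acorr2 L N (fun i j => b i * star (x (N - 1 - j))) τ₁ τ₂ =
    (acorr L a τ₁ + acorr L b τ₁) * (acorr N x τ₂ + acorr N y τ₂) := by
  have e3 : (fun i j => -(a i * star (y (N - 1 - j)))) =
      fun i j => a i * (-(star (y (N - 1 - j)))) := by funext i j; ring
  have e4 : (fun (i j : ℕ) => b i * star (x (N - 1 - j))) =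
      fun i j => b i * (star (x (N - 1 - j))) := rfl
  rw [e3, acorr2_prod, acorr2_prod, acorr2_prod, acorr2_prod]
  have hy : acorr N (fun j => -(star (y (N - 1 - j)))) τ₂ = acorr N y τ₂ := by
    rw [acorr_neg, acorr_rev N y τ₂ h₂]
  have hx : acorr N (fun j => star (x (N - 1 - j))) τ₂ = acorr N x τ₂ :=
    acorr_rev N x τ₂ h₂
  rw [hy, hx]
  ring


end
end

section
/- (Theorem 2) Let x, y be unimodular complex sequences of length N and a, b unimodular complex sequences of length L. Define four L×N complex arrays by X₁[i,j] = a_i·x_j, X₂[i,j] = b_i·y_j, X₃[i,j] = −a_i·conj(y_{N-1-j}), and X₄[i,j] = b_i·conj(x_{N-1-j}). Then for each m ∈ {1,2,3,4} and each column index j ∈ {0,…,N−1}, the j-th column sequence X_{m,j} = (X_m[0,j], X_m[1,j], …, X_m[L−1,j]) satisfies PMEPR(X_{m,j}) ≤ 2 + (2/L)·Σ_{τ=1}^{L-1} |ρ_a(τ) + ρ_b(τ)|. -/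
open Finset

noncomputable section

namespace Stmt8Aux

lemma tri_reindex (L : ℕ) (f : ℕ → ℕ → ℂ) :
    ∑ i ∈ range L, ∑ j ∈ range i, f i j
      = ∑ τ ∈ Icc 1 (L - 1), ∑ j ∈ range (L - τ), f (j + τ) j := by
  rw [Finset.sum_sigma', Finset.sum_sigma']
  refine Finset.sum_nbij' (fun p => ⟨p.1 - p.2, p.2⟩) (fun p => ⟨p.2 + p.1, p.2⟩) ?_ ?_ ?_ ?_ ?_
  · rintro ⟨i, j⟩ h; simp only [mem_sigma, mem_range, mem_Icc] at h ⊢; omega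
  · rintro ⟨τ, j⟩ h; simp only [mem_sigma, mem_range, mem_Icc] at h ⊢; omega
  · rintro ⟨i, j⟩ h; simp only [mem_sigma, mem_range] at h
    simp only [Sigma.mk.inj_iff]; exact ⟨by omega, HEq.rfl⟩
  · rintro ⟨τ, j⟩ h; simp only [mem_sigma, mem_range, mem_Icc] at h
    simp only [Sigma.mk.inj_iff]; exact ⟨by omega, HEq.rfl⟩
  · rintro ⟨i, j⟩ h; simp only [mem_sigma, mem_range] at h
    simp only []; congr 2; omega

lemma upper_swap (L : ℕ) (f : ℕ → ℕ → ℂ) :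
    ∑ i ∈ range L, ∑ j ∈ Ico (i + 1) L, f i j
      = ∑ i ∈ range L, ∑ j ∈ range i, f j i := by
  rw [Finset.sum_sigma', Finset.sum_sigma']
  refine Finset.sum_nbij' (fun p => ⟨p.2, p.1⟩) (fun p => ⟨p.2, p.1⟩) ?_ ?_ ?_ ?_ ?_
  · rintro ⟨i, j⟩ h; simp only [mem_sigma, mem_range, mem_Ico] at h ⊢; omega
  · rintro ⟨i, j⟩ h; simp only [mem_sigma, mem_range, mem_Ico] at h ⊢; omega
  · rintro ⟨i, j⟩ _; rfl
  · rintro ⟨i, j⟩ _; rfl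
  · rintro ⟨i, j⟩ _; rfl

lemma square_split (L : ℕ) (f : ℕ → ℕ → ℂ) :
    ∑ i ∈ range L, ∑ j ∈ range L, f i j
      = (∑ i ∈ range L, f i i)
        + ∑ τ ∈ Icc 1 (L - 1), ∑ j ∈ range (L - τ), (f (j + τ) j + f j (j + τ)) := by
  have h1 : ∀ i ∈ range L, ∑ j ∈ range L, f i j
      = ((∑ j ∈ range i, f i j) + f i i) + ∑ j ∈ Ico (i + 1) L, f i j := by
    intro i hi
    rw [mem_range] at hi
    rw [← Finset.sum_range_succ, Finset.range_eq_Ico, Finset.range_eq_Ico]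
    exact (Finset.sum_Ico_consecutive (f i) (Nat.zero_le (i + 1)) (show i + 1 ≤ L by omega)).symm
  calc ∑ i ∈ range L, ∑ j ∈ range L, f i j
      = ∑ i ∈ range L, (((∑ j ∈ range i, f i j) + f i i) + ∑ j ∈ Ico (i + 1) L, f i j) :=
        Finset.sum_congr rfl h1
    _ = ((∑ i ∈ range L, ∑ j ∈ range i, f i j) + ∑ i ∈ range L, f i i)
        + ∑ i ∈ range L, ∑ j ∈ Ico (i + 1) L, f i j := by
        rw [Finset.sum_add_distrib, Finset.sum_add_distrib]
    _ = (∑ i ∈ range L, f i i)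
        + ((∑ i ∈ range L, ∑ j ∈ range i, f i j)
          + ∑ i ∈ range L, ∑ j ∈ range i, f j i) := by
        rw [upper_swap]; ring
    _ = (∑ i ∈ range L, f i i)
        + ∑ i ∈ range L, ∑ j ∈ range i, (f i j + f j i) := by
        rw [← Finset.sum_add_distrib]
        exact congrArg _ (Finset.sum_congr rfl fun i _ => Finset.sum_add_distrib.symm)
    _ = _ := by rw [tri_reindex L (fun i j => f i j + f j i)]

lemma unit_mul_star {z : ℂ} (h : ‖z‖ = 1) : z * star z = 1 := by
  rw [Complex.star_def, Complex.mul_conj, Complex.normSq_eq_norm_sq, h]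
  norm_num

def E (t : ℝ) (i : ℕ) : ℂ :=
  Complex.exp (2 * Real.pi * Complex.I * (i : ℂ) * ((t : ℝ) : ℂ))

lemma absE (t : ℝ) (i : ℕ) : ‖E t i‖ = 1 := by
  have h : (2 * (Real.pi : ℂ) * Complex.I * (i : ℂ) * ((t : ℝ) : ℂ))
      = ((2 * Real.pi * i * t : ℝ) : ℂ) * Complex.I := by push_cast; ring
  rw [E, h, Complex.norm_exp_ofReal_mul_I]

lemma E_mul_star (t : ℝ) (i : ℕ) : E t i * star (E t i) = 1 := unit_mul_star (absE t i)

lemma E_add (t : ℝ) (j τ : ℕ) : E t (j + τ) = E t j * E t τ := by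
  rw [E, E, E, ← Complex.exp_add]
  congr 1
  push_cast
  ring

/-- natural-shift form of `acorr` -/
lemma acorr_nat (L : ℕ) (a : ℕ → ℂ) (τ : ℕ) :
    acorr L a (τ : ℤ) = ∑ j ∈ range (L - τ), a j * star (a (j + τ)) := by
  have h1 : ∀ j ∈ range L,
      (if 0 ≤ (j : ℤ) + (τ : ℤ) ∧ (j : ℤ) + (τ : ℤ) < (L : ℤ) then
        a j * star (a (((j : ℤ) + (τ : ℤ)).toNat)) else 0)
      = if j + τ < L then a j * star (a (j + τ)) else 0 := by
    intro j _
    rcases lt_or_ge (j + τ) L with h | h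
    · rw [if_pos (by omega), if_pos (by omega)]
      have ht : ((j : ℤ) + (τ : ℤ)).toNat = j + τ := by omega
      rw [ht]
    · rw [if_neg (by omega), if_neg (by omega)]
  have h2 : (range L).filter (fun j => j + τ < L) = range (L - τ) := by
    ext j; simp only [mem_filter, mem_range]; omega
  rw [acorr, Finset.sum_congr rfl h1, ← Finset.sum_filter, h2]

lemma expand (L : ℕ) (a : ℕ → ℂ) (ha : ∀ i < L, ‖a i‖ = 1) (t : ℝ) :
    (∑ i ∈ range L, a i * E t i) * star (∑ i ∈ range L, a i * E t i)
      = (L : ℂ) + ∑ τ ∈ Icc 1 (L - 1),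
          (star (acorr L a (τ : ℤ)) * E t τ + acorr L a (τ : ℤ) * star (E t τ)) := by
  rw [star_sum, Finset.sum_mul_sum]
  rw [square_split L (fun i j => (a i * E t i) * star (a j * E t j))]
  congr 1
  · have hd : ∀ i ∈ range L, (a i * E t i) * star (a i * E t i) = 1 := by
      intro i hi
      rw [mem_range] at hi
      rw [star_mul']
      calc (a i * E t i) * (star (a i) * star (E t i))
          = (a i * star (a i)) * (E t i * star (E t i)) := by ring
        _ = 1 := by rw [unit_mul_star (ha i hi), E_mul_star, mul_one]
    rw [Finset.sum_congr rfl hd, Finset.sum_const, card_range, nsmul_eq_mul, mul_one]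
  · refine Finset.sum_congr rfl fun τ hτ => ?_
    rw [acorr_nat, star_sum, Finset.sum_mul, Finset.sum_mul, ← Finset.sum_add_distrib]
    refine Finset.sum_congr rfl fun j hj => ?_
    simp only [star_mul', star_star, E_add]
    linear_combination (a (j + τ) * star (a j) * E t τ
      + a j * star (a (j + τ)) * star (E t τ)) * (E_mul_star t j)

lemma key (L : ℕ) (a b : ℕ → ℂ)
    (ha : ∀ i < L, ‖a i‖ = 1) (hb : ∀ i < L, ‖b i‖ = 1) (t : ℝ) :
    (‖∑ i ∈ range L, a i * E t i‖) ^ 2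
        + (‖∑ i ∈ range L, b i * E t i‖) ^ 2
      ≤ 2 * L + 2 * ∑ τ ∈ Icc 1 (L - 1),
          ‖acorr L a (τ : ℤ) + acorr L b (τ : ℤ)‖ := by
  have hsq : ∀ z : ℂ, (‖z‖) ^ 2 = (z * star z).re := by
    intro z
    rw [Complex.star_def, Complex.mul_conj]
    simp [Complex.sq_norm]
  rw [hsq, hsq, expand L a ha t, expand L b hb t]
  rw [Complex.add_re, Complex.add_re, Complex.natCast_re, Complex.re_sum, Complex.re_sum]
  have hsum : ∑ τ ∈ Icc 1 (L - 1),
        (star (acorr L a (τ : ℤ)) * E t τ + acorr L a (τ : ℤ) * star (E t τ)).re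
      + ∑ τ ∈ Icc 1 (L - 1),
        (star (acorr L b (τ : ℤ)) * E t τ + acorr L b (τ : ℤ) * star (E t τ)).re
      = ∑ τ ∈ Icc 1 (L - 1),
        ((star (acorr L a (τ : ℤ)) * E t τ + acorr L a (τ : ℤ) * star (E t τ)).re
          + (star (acorr L b (τ : ℤ)) * E t τ + acorr L b (τ : ℤ) * star (E t τ)).re) :=
    Finset.sum_add_distrib.symm
  have hb2 : ∑ τ ∈ Icc 1 (L - 1),
        ((star (acorr L a (τ : ℤ)) * E t τ + acorr L a (τ : ℤ) * star (E t τ)).re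
          + (star (acorr L b (τ : ℤ)) * E t τ + acorr L b (τ : ℤ) * star (E t τ)).re)
      ≤ ∑ τ ∈ Icc 1 (L - 1),
          2 * ‖acorr L a (τ : ℤ) + acorr L b (τ : ℤ)‖ := by
    refine Finset.sum_le_sum fun τ hτ => ?_
    set g : ℂ := acorr L a (τ : ℤ) + acorr L b (τ : ℤ) with hg
    set z : ℂ := g * star (E t τ) with hz
    have e1 : (star (acorr L a (τ : ℤ)) * E t τ + acorr L a (τ : ℤ) * star (E t τ))
        + (star (acorr L b (τ : ℤ)) * E t τ + acorr L b (τ : ℤ) * star (E t τ))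
        = z + star z := by
      rw [hz, hg, star_mul', star_star, star_add]
      ring
    calc (star (acorr L a (τ : ℤ)) * E t τ + acorr L a (τ : ℤ) * star (E t τ)).re
          + (star (acorr L b (τ : ℤ)) * E t τ + acorr L b (τ : ℤ) * star (E t τ)).re
        = (z + star z).re := by rw [← Complex.add_re, e1]
      _ = 2 * z.re := by
          rw [Complex.add_re, Complex.star_def, Complex.conj_re]; ring
      _ ≤ 2 * ‖z‖ := by linarith [Complex.re_le_norm z]
      _ = 2 * ‖g‖ := by
          rw [hz, norm_mul, Complex.star_def, Complex.norm_conj, absE, mul_one]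
  have h2s : ∑ τ ∈ Icc 1 (L - 1), 2 * ‖acorr L a (τ : ℤ) + acorr L b (τ : ℤ)‖
      = 2 * ∑ τ ∈ Icc 1 (L - 1), ‖acorr L a (τ : ℤ) + acorr L b (τ : ℤ)‖ :=
    (Finset.mul_sum _ _ _).symm
  linarith

lemma pmepr_le_of (L : ℕ) (c : ℕ → ℂ) (B : ℝ) (hB : 0 ≤ B)
    (h : ∀ t : ℝ, (‖∑ i ∈ range L, c i * E t i‖) ^ 2 ≤ L * B) :
    pmepr L c ≤ B := by
  haveI : Nonempty (Set.Icc (0 : ℝ) 1) := ⟨⟨0, by norm_num⟩⟩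
  refine ciSup_le fun t => ?_
  rcases Nat.eq_zero_or_pos L with hL | hL
  · subst hL
    simpa using hB
  · rw [div_le_iff₀ (by exact_mod_cast hL : (0:ℝ) < (L:ℝ))]
    exact (h t).trans_eq (mul_comm _ _)

lemma col_bound (L : ℕ) (a b : ℕ → ℂ)
    (ha : ∀ i < L, ‖a i‖ = 1) (hb : ∀ i < L, ‖b i‖ = 1)
    (u : ℂ) (hu : ‖u‖ = 1) :
    pmepr L (fun i => a i * u)
      ≤ 2 + (2 / L) * ∑ τ ∈ Icc 1 (L - 1),
          ‖acorr L a (τ : ℤ) + acorr L b (τ : ℤ)‖ := by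
  have hS : (0 : ℝ) ≤ ∑ τ ∈ Icc 1 (L - 1),
      ‖acorr L a (τ : ℤ) + acorr L b (τ : ℤ)‖ :=
    Finset.sum_nonneg fun τ _ => norm_nonneg _
  have hB : (0 : ℝ) ≤ 2 + (2 / L) * ∑ τ ∈ Icc 1 (L - 1),
      ‖acorr L a (τ : ℤ) + acorr L b (τ : ℤ)‖ := by
    have h2L : (0 : ℝ) ≤ 2 / (L : ℝ) := div_nonneg (by norm_num) (Nat.cast_nonneg L)
    nlinarith
  refine pmepr_le_of L _ _ hB fun t => ?_
  have he : (∑ i ∈ range L, (fun i => a i * u) i * E t i)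
      = u * ∑ i ∈ range L, a i * E t i := by
    rw [Finset.mul_sum]
    exact Finset.sum_congr rfl fun i _ => by ring
  rw [he, norm_mul, hu, one_mul]
  rcases Nat.eq_zero_or_pos L with hL | hL
  · subst hL
    simp
  · have hk := key L a b ha hb t
    have hnn : (0 : ℝ) ≤ (‖∑ i ∈ range L, b i * E t i‖) ^ 2 := sq_nonneg _
    have hLB : (L : ℝ) * (2 + (2 / L) * ∑ τ ∈ Icc 1 (L - 1),
        ‖acorr L a (τ : ℤ) + acorr L b (τ : ℤ)‖)
        = 2 * L + 2 * ∑ τ ∈ Icc 1 (L - 1),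
            ‖acorr L a (τ : ℤ) + acorr L b (τ : ℤ)‖ := by
      have : (L : ℝ) ≠ 0 := by exact_mod_cast hL.ne'
      field_simp
    rw [hLB]
    linarith

end Stmt8Aux

/-- Theorem 2: every column sequence of each of the four arrays
`X₁[i,j] = a_i x_j`, `X₂[i,j] = b_i y_j`, `X₃[i,j] = -a_i conj (y_{N-1-j})`,
`X₄[i,j] = b_i conj (x_{N-1-j})` has PMEPR at most
`2 + (2/L) Σ_{τ=1}^{L-1} |ρ_a(τ) + ρ_b(τ)|`. -/
theorem stmt_8 (L N : ℕ) (x y a b : ℕ → ℂ)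
    (hx : ∀ j < N, ‖x j‖ = 1) (hy : ∀ j < N, ‖y j‖ = 1)
    (ha : ∀ i < L, ‖a i‖ = 1) (hb : ∀ i < L, ‖b i‖ = 1) :
    ∀ j < N,
      pmepr L (fun i => a i * x j) ≤
        2 + (2 / L) * ∑ τ ∈ Finset.Icc 1 (L - 1),
          ‖acorr L a (τ : ℤ) + acorr L b (τ : ℤ)‖ ∧
      pmepr L (fun i => b i * y j) ≤
        2 + (2 / L) * ∑ τ ∈ Finset.Icc 1 (L - 1),
          ‖acorr L a (τ : ℤ) + acorr L b (τ : ℤ)‖ ∧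
      pmepr L (fun i => -(a i * star (y (N - 1 - j)))) ≤
        2 + (2 / L) * ∑ τ ∈ Finset.Icc 1 (L - 1),
          ‖acorr L a (τ : ℤ) + acorr L b (τ : ℤ)‖ ∧
      pmepr L (fun i => b i * star (x (N - 1 - j))) ≤
        2 + (2 / L) * ∑ τ ∈ Finset.Icc 1 (L - 1),
          ‖acorr L a (τ : ℤ) + acorr L b (τ : ℤ)‖ := by
  intro j hj
  have hcomm : ∑ τ ∈ Finset.Icc 1 (L - 1),
      ‖acorr L b (τ : ℤ) + acorr L a (τ : ℤ)‖
      = ∑ τ ∈ Finset.Icc 1 (L - 1),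
        ‖acorr L a (τ : ℤ) + acorr L b (τ : ℤ)‖ :=
    Finset.sum_congr rfl fun τ _ => by rw [add_comm]
  have hyu : ‖y (N - 1 - j)‖ = 1 := hy _ (by omega)
  have hxu : ‖x (N - 1 - j)‖ = 1 := hx _ (by omega)
  refine ⟨Stmt8Aux.col_bound L a b ha hb (x j) (hx j hj), ?_, ?_, ?_⟩
  · have := Stmt8Aux.col_bound L b a hb ha (y j) (hy j hj)
    rwa [hcomm] at this
  · have h1 : (fun i => -(a i * star (y (N - 1 - j))))
        = fun i => a i * (-(star (y (N - 1 - j)))) := by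
      funext i; ring
    rw [h1]
    refine Stmt8Aux.col_bound L a b ha hb _ ?_
    rw [norm_neg, Complex.star_def, Complex.norm_conj, hyu]
  · have := Stmt8Aux.col_bound L b a hb ha (star (x (N - 1 - j)))
      (by rw [Complex.star_def, Complex.norm_conj, hxu])
    rwa [hcomm] at this

end
end

section
/- (Proposition 1) Let n ≥ 0 be an integer and L = 2^{n+1} + 2^n. Let a, b be unimodular complex sequences of length L whose aperiodic autocorrelation sum satisfies ρ_a(τ) + ρ_b(τ) = 0 for every τ with 1 ≤ τ ≤ L−1 and τ ≠ 2^{n+1}, and |ρ_a(2^{n+1}) + ρ_b(2^{n+1})| ≤ 2^{n+1}. Let x, y be unimodular complex sequences of length N, and define four L×N complex arrays by X₁[i,j] = a_i·x_j, X₂[i,j] = b_i·y_j, X₃[i,j] = −a_i·conj(y_{N-1-j}), and X₄[i,j] = b_i·conj(x_{N-1-j}). Then every column sequence of each X_m (m ∈ {1,2,3,4}) has PMEPR at most 10/3. -/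
open Finset

noncomputable section

lemma acorr_neg_s9 (L : ℕ) (c : ℕ → ℂ) (τ : ℤ) :
    acorr L c (-τ) = star (acorr L c τ) := by
  classical
  unfold acorr
  rw [star_sum]
  have h1 : ∀ j ∈ Finset.range L,
      star (if 0 ≤ (j : ℤ) + τ ∧ (j : ℤ) + τ < (L : ℤ) then
        c j * star (c ((j : ℤ) + τ).toNat) else 0)
      = (if 0 ≤ (j : ℤ) + τ ∧ (j : ℤ) + τ < (L : ℤ) then
        c (((j : ℤ) + τ).toNat) * star (c j) else 0) := by
    intro j _
    split <;> simp [star_mul, mul_comm]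
  rw [Finset.sum_congr rfl h1]
  rw [← Finset.sum_filter, ← Finset.sum_filter]
  refine Finset.sum_nbij' (fun j => ((j : ℤ) - τ).toNat) (fun j => ((j : ℤ) + τ).toNat) ?_ ?_ ?_ ?_ ?_
  · intro j hj
    simp only [Finset.mem_filter, Finset.mem_range] at hj ⊢
    omega
  · intro j hj
    simp only [Finset.mem_filter, Finset.mem_range] at hj ⊢
    omega
  · intro j hj
    simp only [Finset.mem_filter, Finset.mem_range] at hj
    omega
  · intro j hj
    simp only [Finset.mem_filter, Finset.mem_range] at hj
    omega
  · intro j hj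
    simp only [Finset.mem_filter, Finset.mem_range] at hj
    have e1 : ((((j : ℤ) - τ).toNat : ℤ) + τ).toNat = j := by omega
    have e2 : ((j : ℤ) + -τ).toNat = ((j:ℤ) - τ).toNat := by omega
    rw [e1, e2]

lemma acorr_expand (L : ℕ) (c : ℕ → ℂ) (g : ℤ → ℂ) :
    ∑ i ∈ Finset.range L, ∑ k ∈ Finset.range L, g ((k : ℤ) - (i : ℤ)) * (c i * star (c k))
      = ∑ τ ∈ Finset.Icc (-(L : ℤ) + 1) ((L : ℤ) - 1), g τ * acorr L c τ := by
  classical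
  unfold acorr
  simp only [Finset.mul_sum, mul_ite, mul_zero]
  rw [← Finset.sum_product', ← Finset.sum_product']
  rw [← Finset.sum_filter]
  refine Finset.sum_nbij' (fun q => (((q.2 : ℤ) - (q.1 : ℤ)), q.1))
    (fun p => (p.2, ((p.2 : ℤ) + p.1).toNat)) ?_ ?_ ?_ ?_ ?_
  · intro q hq
    simp only [Finset.mem_filter, Finset.mem_product, Finset.mem_range, Finset.mem_Icc] at hq ⊢
    omega
  · intro p hp
    simp only [Finset.mem_filter, Finset.mem_product, Finset.mem_range, Finset.mem_Icc] at hp ⊢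
    omega
  · intro q hq
    simp only [Finset.mem_filter, Finset.mem_product, Finset.mem_range, Finset.mem_Icc] at hq
    dsimp only
    ext <;> dsimp <;> omega
  · intro p hp
    simp only [Finset.mem_filter, Finset.mem_product, Finset.mem_range, Finset.mem_Icc] at hp
    dsimp only
    ext <;> dsimp <;> omega
  · intro q hq
    simp only [Finset.mem_product, Finset.mem_range] at hq
    dsimp only
    have e1 : (((q.1 : ℤ)) + ((q.2 : ℤ) - (q.1 : ℤ))).toNat = q.2 := by omega
    rw [e1]

lemma acorr_zero (L : ℕ) (c : ℕ → ℂ) (hc : ∀ i < L, ‖c i‖ = 1) :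
    acorr L c 0 = (L : ℂ) := by
  unfold acorr
  have h : ∀ j ∈ Finset.range L,
      (if 0 ≤ (j : ℤ) + 0 ∧ (j : ℤ) + 0 < (L : ℤ) then
        c j * star (c ((j : ℤ) + 0).toNat) else 0) = 1 := by
    intro j hj
    rw [Finset.mem_range] at hj
    rw [if_pos (by omega)]
    have e : ((j : ℤ) + 0).toNat = j := by omega
    rw [e, Complex.star_def, Complex.mul_conj, ← Complex.sq_norm, hc j hj]
    norm_num
  rw [Finset.sum_congr rfl h]
  simp

lemma key (n L : ℕ) (hL : L = 2 ^ (n + 1) + 2 ^ n) (a b : ℕ → ℂ)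
    (ha : ∀ i < L, ‖a i‖ = 1) (hb : ∀ i < L, ‖b i‖ = 1)
    (hzero : ∀ τ : ℤ, 1 ≤ τ → τ ≤ (L : ℤ) - 1 → τ ≠ 2 ^ (n + 1) →
      acorr L a τ + acorr L b τ = 0)
    (hpeak : ‖acorr L a (2 ^ (n + 1)) + acorr L b (2 ^ (n + 1))‖ ≤ 2 ^ (n + 1))
    (z : ℂ) (hz : ‖z‖ = 1) :
    ‖∑ i ∈ Finset.range L, a i * z ^ i‖ ^ 2 ≤ 10 / 3 * L ∧
    ‖∑ i ∈ Finset.range L, b i * z ^ i‖ ^ 2 ≤ 10 / 3 * L := by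
  classical
  have hz0 : z ≠ 0 := by
    intro h; rw [h] at hz; simp at hz
  have hzs : star z = z⁻¹ := by
    symm
    apply inv_eq_of_mul_eq_one_right
    rw [Complex.star_def, Complex.mul_conj, ← Complex.sq_norm, hz]
    norm_num
  set Sa := ∑ i ∈ Finset.range L, a i * z ^ i with hSa
  set Sb := ∑ i ∈ Finset.range L, b i * z ^ i with hSb
  have hsz : ∀ k : ℕ, star (z ^ k) = z ^ (-(k : ℤ)) := by
    intro k
    rw [star_pow, hzs, inv_pow, ← zpow_natCast z k, ← zpow_neg]
  have expand : ∀ c : ℕ → ℂ,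
      (∑ i ∈ Finset.range L, c i * z ^ i) * star (∑ i ∈ Finset.range L, c i * z ^ i)
      = ∑ τ ∈ Finset.Icc (-(L : ℤ) + 1) ((L : ℤ) - 1), z ^ (-τ) * acorr L c τ := by
    intro c
    rw [star_sum, Finset.sum_mul_sum, ← acorr_expand L c (fun τ => z ^ (-τ))]
    refine Finset.sum_congr rfl fun i _ => Finset.sum_congr rfl fun k _ => ?_
    rw [star_mul, hsz, neg_sub]
    rw [show (i : ℤ) - k = (i : ℤ) + -(k : ℤ) by ring, zpow_add₀ hz0, zpow_natCast]
    ring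
  have hT : Sa * star Sa + Sb * star Sb
      = ∑ τ ∈ Finset.Icc (-(L : ℤ) + 1) ((L : ℤ) - 1),
          z ^ (-τ) * (acorr L a τ + acorr L b τ) := by
    rw [hSa, hSb, expand a, expand b, ← Finset.sum_add_distrib]
    exact Finset.sum_congr rfl fun τ _ => by ring
  have habs : ∀ (m : ℤ), ‖z ^ m‖ = 1 := fun m => by
    rw [norm_zpow, hz, one_zpow]
  set ρ : ℤ → ℂ := fun τ => acorr L a τ + acorr L b τ with hρ
  set T₀ : ℤ := 2 ^ (n + 1) with hT₀
  have hρneg : ∀ t : ℤ, ρ (-t) = star (ρ t) := by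
    intro t
    simp only [hρ]
    rw [acorr_neg_s9, acorr_neg_s9, star_add]
  have hρzero : ∀ t : ℤ, 1 ≤ t → t ≤ (L : ℤ) - 1 → t ≠ T₀ → ρ t = 0 := by
    intro t h1 h2 h3
    simp only [hρ]
    exact hzero t h1 h2 h3
  have hρpeak : ‖ρ T₀‖ ≤ 2 ^ (n + 1) := by
    simp only [hρ]
    exact hpeak
  have h2npos : (0 : ℤ) < 2 ^ (n + 1) := by positivity
  have h2npos' : (0 : ℤ) < 2 ^ n := by positivity
  have hLval' : (L : ℤ) = 2 ^ (n + 1) + 2 ^ n := by rw [hL]; push_cast; ring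
  have h2n1 : (2 : ℤ) ^ (n + 1) = 2 ^ n * 2 := by rw [pow_succ]
  have hT0L : T₀ ≤ (L : ℤ) - 1 := by rw [hT₀]; omega
  have hT0pos : 1 ≤ T₀ := by rw [hT₀]; omega
  have hbound : ∀ τ ∈ Finset.Icc (-(L : ℤ) + 1) ((L : ℤ) - 1),
      ‖z ^ (-τ) * ρ τ‖ ≤
        (if τ = 0 then (2 * L : ℝ) else 0) + (if τ = T₀ then (2 ^ (n + 1) : ℝ) else 0)
          + (if τ = -T₀ then (2 ^ (n + 1) : ℝ) else 0) := by
    intro τ hτ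
    rw [Finset.mem_Icc] at hτ
    rw [norm_mul, habs, one_mul]
    by_cases h0 : τ = 0
    · subst h0
      have hne1 : ¬ ((0 : ℤ) = T₀) := by omega
      have hne2 : ¬ ((0 : ℤ) = -T₀) := by omega
      rw [if_pos rfl, if_neg hne1, if_neg hne2]
      have e : ρ 0 = ((2 * L : ℝ) : ℂ) := by
        simp only [hρ]
        rw [acorr_zero L a ha, acorr_zero L b hb]
        push_cast
        ring
      rw [e, Complex.norm_real, Real.norm_of_nonneg (by positivity)]
      linarith
    by_cases h1 : τ = T₀
    · subst h1
      have hne2 : ¬ (T₀ = -T₀) := by omega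
      rw [if_neg h0, if_pos rfl, if_neg hne2]
      have := hρpeak
      linarith
    by_cases h2 : τ = -T₀
    · subst h2
      rw [if_neg h0, if_neg h1, if_pos rfl]
      rw [hρneg, Complex.star_def, Complex.norm_conj]
      have := hρpeak
      linarith
    · rw [if_neg h0, if_neg h1, if_neg h2]
      have hz' : ρ τ = 0 := by
        rcases lt_or_gt_of_ne h0 with hneg | hpos
        · rw [show τ = -(-τ) by ring, hρneg,
            hρzero (-τ) (by omega) (by omega) (by omega), star_zero]
        · exact hρzero τ (by omega) (by omega) h1
      rw [hz']
      simp
  have hsum : ‖Sa * star Sa + Sb * star Sb‖ ≤ 2 * L + 2 ^ (n + 2) := by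
    rw [hT]
    refine le_trans (norm_sum_le _ _) ?_
    refine le_trans (Finset.sum_le_sum hbound) ?_
    rw [Finset.sum_add_distrib, Finset.sum_add_distrib]
    rw [Finset.sum_ite_eq' _ (0 : ℤ), Finset.sum_ite_eq' _ T₀, Finset.sum_ite_eq' _ (-T₀)]
    have m0 : (0 : ℤ) ∈ Finset.Icc (-(L : ℤ) + 1) ((L : ℤ) - 1) := by
      rw [Finset.mem_Icc]; omega
    have m1 : T₀ ∈ Finset.Icc (-(L : ℤ) + 1) ((L : ℤ) - 1) := by
      rw [Finset.mem_Icc]; omega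
    have m2 : -T₀ ∈ Finset.Icc (-(L : ℤ) + 1) ((L : ℤ) - 1) := by
      rw [Finset.mem_Icc]; omega
    rw [if_pos m0, if_pos m1, if_pos m2]
    have e2 : (2 : ℝ) ^ (n + 2) = 2 ^ (n + 1) + 2 ^ (n + 1) := by ring
    linarith
  have h1 : Sa * star Sa = ((‖Sa‖ ^ 2 : ℝ) : ℂ) := by
    rw [Complex.star_def, Complex.mul_conj, Complex.sq_norm]
  have h2 : Sb * star Sb = ((‖Sb‖ ^ 2 : ℝ) : ℂ) := by
    rw [Complex.star_def, Complex.mul_conj, Complex.sq_norm]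
  have hfin : ‖Sa‖ ^ 2 + ‖Sb‖ ^ 2 ≤ 2 * L + 2 ^ (n + 2) := by
    have h3 := hsum
    rw [h1, h2, ← Complex.ofReal_add, Complex.norm_real,
      Real.norm_of_nonneg (by positivity)] at h3
    exact h3
  have hLval : (2 * L + 2 ^ (n + 2) : ℝ) = 10 / 3 * L := by
    rw [hL]; push_cast; ring
  rw [hLval] at hfin
  constructor
  · nlinarith [sq_nonneg (‖Sb‖)]
  · nlinarith [sq_nonneg (‖Sa‖)]

lemma pmepr_le_of_bound (L : ℕ) (hL : 0 < L) (d : ℕ → ℂ)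
    (h : ∀ z : ℂ, ‖z‖ = 1 →
      ‖∑ i ∈ Finset.range L, d i * z ^ i‖ ^ 2 ≤ 10 / 3 * L) :
    pmepr L d ≤ 10 / 3 := by
  have hne : Nonempty (Set.Icc (0 : ℝ) 1) := ⟨⟨0, by norm_num⟩⟩
  apply ciSup_le
  intro t
  have hLpos : (0 : ℝ) < L := by exact_mod_cast hL
  rw [div_le_iff₀ hLpos]
  set z : ℂ := Complex.exp (2 * Real.pi * Complex.I * ((t : ℝ) : ℂ)) with hzdef
  have hz : ‖z‖ = 1 := by
    rw [hzdef, show (2 * Real.pi * Complex.I * ((t : ℝ) : ℂ))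
        = ((2 * Real.pi * (t : ℝ) : ℝ) : ℂ) * Complex.I by push_cast; ring]
    exact Complex.norm_exp_ofReal_mul_I _
  have he : ∀ i : ℕ, Complex.exp (2 * Real.pi * Complex.I * (i : ℂ) * ((t : ℝ) : ℂ))
      = z ^ i := by
    intro i
    rw [hzdef, ← Complex.exp_nat_mul]
    congr 1
    ring
  have he2 : (∑ i ∈ Finset.range L,
        d i * Complex.exp (2 * Real.pi * Complex.I * (i : ℂ) * ((t : ℝ) : ℂ)))
      = ∑ i ∈ Finset.range L, d i * z ^ i :=
    Finset.sum_congr rfl fun i _ => by rw [he i]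
  rw [he2]
  exact h z hz

lemma pmepr_col (L : ℕ) (hL0 : 0 < L) (c : ℕ → ℂ) (w : ℂ) (hw : ‖w‖ = 1)
    (hc : ∀ z : ℂ, ‖z‖ = 1 →
      ‖∑ i ∈ Finset.range L, c i * z ^ i‖ ^ 2 ≤ 10 / 3 * L) :
    pmepr L (fun i => c i * w) ≤ 10 / 3 := by
  apply pmepr_le_of_bound L hL0
  intro z hz
  have e : (∑ i ∈ Finset.range L, (c i * w) * z ^ i)
      = (∑ i ∈ Finset.range L, c i * z ^ i) * w := by
    rw [Finset.sum_mul]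
    exact Finset.sum_congr rfl fun i _ => by ring
  rw [e, norm_mul, hw, mul_one]
  exact hc z hz


/-- Proposition 1: with `L = 2^{n+1} + 2^n` and a unimodular pair `(a, b)`
whose autocorrelation sum vanishes for `1 ≤ τ ≤ L-1`, `τ ≠ 2^{n+1}`, and is bounded in
modulus by `2^{n+1}` at `τ = 2^{n+1}`, every column sequence of each of the four arrays
has PMEPR at most `10/3`. -/
theorem stmt_9 (n N : ℕ) (L : ℕ) (hL : L = 2 ^ (n + 1) + 2 ^ n)
    (a b x y : ℕ → ℂ)
    (ha : ∀ i < L, ‖a i‖ = 1) (hb : ∀ i < L, ‖b i‖ = 1)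
    (hx : ∀ j < N, ‖x j‖ = 1) (hy : ∀ j < N, ‖y j‖ = 1)
    (hzero : ∀ τ : ℤ, 1 ≤ τ → τ ≤ (L : ℤ) - 1 → τ ≠ 2 ^ (n + 1) →
      acorr L a τ + acorr L b τ = 0)
    (hpeak : ‖acorr L a (2 ^ (n + 1)) + acorr L b (2 ^ (n + 1))‖ ≤ 2 ^ (n + 1)) :
    ∀ j < N,
      pmepr L (fun i => a i * x j) ≤ 10 / 3 ∧
      pmepr L (fun i => b i * y j) ≤ 10 / 3 ∧
      pmepr L (fun i => -(a i * star (y (N - 1 - j)))) ≤ 10 / 3 ∧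
      pmepr L (fun i => b i * star (x (N - 1 - j))) ≤ 10 / 3 := by
  intro j hj
  have hL0 : 0 < L := by rw [hL]; positivity
  have haB : ∀ z : ℂ, ‖z‖ = 1 →
      ‖∑ i ∈ Finset.range L, a i * z ^ i‖ ^ 2 ≤ 10 / 3 * L :=
    fun z hz => (key n L hL a b ha hb hzero hpeak z hz).1
  have hbB : ∀ z : ℂ, ‖z‖ = 1 →
      ‖∑ i ∈ Finset.range L, b i * z ^ i‖ ^ 2 ≤ 10 / 3 * L :=
    fun z hz => (key n L hL a b ha hb hzero hpeak z hz).2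
  have hNj : N - 1 - j < N := by omega
  refine ⟨pmepr_col L hL0 a (x j) (hx j hj) haB,
    pmepr_col L hL0 b (y j) (hy j hj) hbB, ?_, ?_⟩
  · have e : (fun i => -(a i * star (y (N - 1 - j))))
        = (fun i => a i * (-(star (y (N - 1 - j))))) := by
      funext i; ring
    rw [e]
    refine pmepr_col L hL0 a _ ?_ haB
    rw [norm_neg, Complex.star_def, Complex.norm_conj]
    exact hy _ hNj
  · refine pmepr_col L hL0 b _ ?_ hbB
    rw [Complex.star_def, Complex.norm_conj]
    exact hx _ hNj


end
end

section
/- (Proposition 3) Let n ≥ 0 be an integer and L = 2^{n+3} + 2^{n+2} + 2^{n+1}. Let a, b be unimodular complex sequences of length L whose aperiodic autocorrelation sum satisfies ρ_a(τ) + ρ_b(τ) = 0 for every τ with 1 ≤ τ ≤ L−1 that is not of the form τ = 2^{n+3} + l·2^{n+1} with l ∈ {0,1,2}, and |ρ_a(τ) + ρ_b(τ)| ≤ 2^{n+2} for each τ = 2^{n+3} + l·2^{n+1} with l ∈ {0,1,2}. Let x, y be unimodular complex sequences of length N, and define four L×N complex arrays by X₁[i,j] = a_i·x_j, X₂[i,j]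 = b_i·y_j, X₃[i,j] = −a_i·conj(y_{N-1-j}), and X₄[i,j] = b_i·conj(x_{N-1-j}). Then every column sequence of each X_m (m ∈ {1,2,3,4}) has PMEPR at most 26/7. -/
open Finset

noncomputable section

/- ===== auxiliary lemmas ===== -/

private lemma split_sum' {M : Type*} [AddCommMonoid M] (L : ℕ) (g : ℕ → ℕ → M) :
    ∑ i ∈ range L, ∑ k ∈ range L, g i k =
      (∑ i ∈ range L, g i i) + ∑ k ∈ range L, ∑ i ∈ range k, (g i k + g k i) := by
  induction L with
  | zero => simp
  | succ L ih =>
    simp only [Finset.sum_range_succ, Finset.sum_add_distrib] at *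
    rw [ih]; abel

private lemma reindex_sum' {M : Type*} [AddCommMonoid M] (L : ℕ) (g : ℕ → ℕ → M) :
    ∑ k ∈ range L, ∑ i ∈ range k, g i k =
      ∑ τ ∈ Finset.Icc 1 (L - 1), ∑ i ∈ range (L - τ), g i (i + τ) := by
  rw [Finset.sum_sigma', Finset.sum_sigma']
  apply Finset.sum_nbij' (i := fun p => ⟨p.1 - p.2, p.2⟩) (j := fun q => ⟨q.2 + q.1, q.2⟩)
  · rintro ⟨k, i⟩ hp; simp only [Finset.mem_sigma, mem_range, Finset.mem_Icc] at *; omega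
  · rintro ⟨τ, i⟩ hq; simp only [Finset.mem_sigma, mem_range, Finset.mem_Icc] at *; omega
  · rintro ⟨k, i⟩ hp; simp only [Finset.mem_sigma, mem_range] at hp
    dsimp only; rw [Nat.add_sub_cancel' (le_of_lt hp.2)]
  · rintro ⟨τ, i⟩ hq; dsimp only; rw [Nat.add_sub_cancel_left]
  · rintro ⟨k, i⟩ hp; simp only [Finset.mem_sigma, mem_range] at hp
    dsimp only; congr 1; omega

private lemma acorr_eq' (L τ : ℕ) (c : ℕ → ℂ) :
    acorr L c (τ : ℤ) = ∑ i ∈ range (L - τ), c i * star (c (i + τ)) := by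
  unfold acorr
  rw [← Finset.sum_subset (Finset.range_subset_range.mpr (Nat.sub_le L τ))]
  · apply Finset.sum_congr rfl
    intro j hj
    simp only [mem_range] at hj
    rw [if_pos (by omega)]
    congr 2 <;> omega
  · intro j hj hj2
    simp only [mem_range] at hj hj2
    rw [if_neg (by omega)]

private lemma star_exp_real' (r : ℝ) :
    star (Complex.exp ((r : ℂ) * Complex.I)) = Complex.exp (((-r : ℝ) : ℂ) * Complex.I) := by
  rw [Complex.star_def, ← Complex.exp_conj]
  congr 1
  simp [Complex.conj_ofReal, Complex.conj_I]

private lemma exp_form' (t : ℝ) (m : ℕ) :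
    Complex.exp (2 * Real.pi * Complex.I * m * t) =
      Complex.exp (((2 * Real.pi * m * t : ℝ) : ℂ) * Complex.I) := by
  congr 1; push_cast; ring

private lemma exp_mul_star' (t : ℝ) (i k : ℕ) :
    Complex.exp (2 * Real.pi * Complex.I * i * t) *
      star (Complex.exp (2 * Real.pi * Complex.I * (i + k : ℕ) * t)) =
    Complex.exp (((-(2 * Real.pi * k * t) : ℝ) : ℂ) * Complex.I) := by
  rw [exp_form', exp_form', star_exp_real', ← Complex.exp_add]
  congr 1
  push_cast
  ring

private lemma sq_abs_eq (L : ℕ) (c : ℕ → ℂ) (hc : ∀ i < L, ‖c i‖ = 1) (t : ℝ) :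
    (‖∑ i ∈ range L, c i * Complex.exp (2 * Real.pi * Complex.I * (i : ℂ) * (t : ℂ))‖) ^ 2
    = L + 2 * ∑ τ ∈ Finset.Icc 1 (L - 1),
        (acorr L c (τ : ℤ) * Complex.exp (((-(2 * Real.pi * τ * t) : ℝ) : ℂ) * Complex.I)).re := by
  set w : ℕ → ℂ := fun i => Complex.exp (2 * Real.pi * Complex.I * (i : ℂ) * (t : ℂ)) with hw
  have habsw : ∀ i : ℕ, ‖w i‖ = 1 := by
    intro i; rw [hw]; simp only
    rw [exp_form']
    exact Complex.norm_exp_ofReal_mul_I _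
  set S := ∑ i ∈ range L, c i * w i with hS
  have h1 : ‖S‖ ^ 2 = (S * star S).re := by
    rw [Complex.star_def, Complex.mul_conj, Complex.sq_norm]
    simp
  have h2 : S * star S = ∑ i ∈ range L, ∑ k ∈ range L, (c i * w i) * star (c k * w k) := by
    rw [hS, star_sum, Finset.sum_mul_sum]
  rw [h1, h2, Complex.re_sum]
  simp only [Complex.re_sum]
  rw [split_sum' L (fun i k => ((c i * w i) * star (c k * w k)).re)]
  have hdiag : ∑ i ∈ range L, ((c i * w i) * star (c i * w i)).re = (L : ℝ) := by
    rw [Finset.sum_congr rfl (fun i hi => ?_), Finset.sum_const, card_range, nsmul_eq_mul, mul_one]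
    · simp only [mem_range] at hi
      rw [Complex.star_def, Complex.mul_conj, Complex.ofReal_re, ← Complex.sq_norm, norm_mul,
        hc i hi, habsw i]
      norm_num
  rw [hdiag]
  congr 1
  have hsym : ∀ i k : ℕ, ((c k * w k) * star (c i * w i)).re = ((c i * w i) * star (c k * w k)).re := by
    intro i k
    have : (c k * w k) * star (c i * w i) = star ((c i * w i) * star (c k * w k)) := by
      simp only [star_mul', star_star]
      ring
    rw [this, Complex.star_def, Complex.conj_re]
  have hstep : ∑ k ∈ range L, ∑ i ∈ range k,
      (((c i * w i) * star (c k * w k)).re + ((c k * w k) * star (c i * w i)).re)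
      = 2 * ∑ k ∈ range L, ∑ i ∈ range k, ((c i * w i) * star (c k * w k)).re := by
    rw [Finset.mul_sum]
    apply Finset.sum_congr rfl
    intro k _
    rw [Finset.mul_sum]
    apply Finset.sum_congr rfl
    intro i _
    rw [hsym]
    ring
  rw [hstep]
  congr 1
  rw [reindex_sum' L (fun i k => ((c i * w i) * star (c k * w k)).re)]
  apply Finset.sum_congr rfl
  intro τ hτ
  rw [← Complex.re_sum]
  congr 1
  rw [acorr_eq', Finset.sum_mul]
  apply Finset.sum_congr rfl
  intro i _
  simp only [hw]
  have h := exp_mul_star' t i τ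
  rw [star_mul', ← h]
  ring

private lemma key_bound (L : ℕ) (a b : ℕ → ℂ)
    (ha : ∀ i < L, ‖a i‖ = 1) (hb : ∀ i < L, ‖b i‖ = 1)
    (C : ℝ)
    (hC : ∑ τ ∈ Finset.Icc 1 (L - 1),
      ‖acorr L a (τ : ℤ) + acorr L b (τ : ℤ)‖ ≤ C) (t : ℝ) :
    (‖∑ i ∈ range L, a i * Complex.exp (2 * Real.pi * Complex.I * (i : ℂ) * (t : ℂ))‖) ^ 2 +
    (‖∑ i ∈ range L, b i * Complex.exp (2 * Real.pi * Complex.I * (i : ℂ) * (t : ℂ))‖) ^ 2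
      ≤ 2 * L + 2 * C := by
  rw [sq_abs_eq L a ha t, sq_abs_eq L b hb t]
  have key : ∑ τ ∈ Finset.Icc 1 (L - 1),
        (acorr L a (τ : ℤ) * Complex.exp (((-(2 * Real.pi * τ * t) : ℝ) : ℂ) * Complex.I)).re +
      ∑ τ ∈ Finset.Icc 1 (L - 1),
        (acorr L b (τ : ℤ) * Complex.exp (((-(2 * Real.pi * τ * t) : ℝ) : ℂ) * Complex.I)).re ≤ C := by
    calc _ = ∑ τ ∈ Finset.Icc 1 (L - 1),
        ((acorr L a (τ : ℤ) + acorr L b (τ : ℤ)) *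
          Complex.exp (((-(2 * Real.pi * τ * t) : ℝ) : ℂ) * Complex.I)).re := by
          rw [← Finset.sum_add_distrib]
          apply Finset.sum_congr rfl
          intro τ _
          rw [add_mul, Complex.add_re]
      _ ≤ ∑ τ ∈ Finset.Icc 1 (L - 1),
          ‖(acorr L a (τ : ℤ) + acorr L b (τ : ℤ)) *
            Complex.exp (((-(2 * Real.pi * τ * t) : ℝ) : ℂ) * Complex.I)‖ :=
          Finset.sum_le_sum (fun τ _ => Complex.re_le_norm _)
      _ = ∑ τ ∈ Finset.Icc 1 (L - 1),
          ‖acorr L a (τ : ℤ) + acorr L b (τ : ℤ)‖ := by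
          apply Finset.sum_congr rfl
          intro τ _
          rw [norm_mul, Complex.norm_exp_ofReal_mul_I, mul_one]
      _ ≤ C := hC
  linarith

/-- Proposition 3: with `L = 2^{n+3} + 2^{n+2} + 2^{n+1}` and a unimodular
pair `(a, b)` whose autocorrelation sum vanishes for every `1 ≤ τ ≤ L-1` not of the form
`2^{n+3} + l·2^{n+1}` with `l ∈ {0,1,2}`, and is bounded in modulus by `2^{n+2}` at each
such `τ`, every column sequence of each of the four arrays has PMEPR at most `26/7`. -/
theorem stmt_11 (n N : ℕ) (L : ℕ) (hL : L = 2 ^ (n + 3) + 2 ^ (n + 2) + 2 ^ (n + 1))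
    (a b x y : ℕ → ℂ)
    (ha : ∀ i < L, ‖a i‖ = 1) (hb : ∀ i < L, ‖b i‖ = 1)
    (hx : ∀ j < N, ‖x j‖ = 1) (hy : ∀ j < N, ‖y j‖ = 1)
    (hzero : ∀ τ : ℤ, 1 ≤ τ → τ ≤ (L : ℤ) - 1 →
      (∀ l : ℤ, 0 ≤ l → l ≤ 2 → τ ≠ 2 ^ (n + 3) + l * 2 ^ (n + 1)) →
      acorr L a τ + acorr L b τ = 0)
    (hpeak : ∀ l : ℤ, 0 ≤ l → l ≤ 2 →
      ‖acorr L a (2 ^ (n + 3) + l * 2 ^ (n + 1)) +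
        acorr L b (2 ^ (n + 3) + l * 2 ^ (n + 1))‖ ≤ 2 ^ (n + 2)) :
    ∀ j < N,
      pmepr L (fun i => a i * x j) ≤ 26 / 7 ∧
      pmepr L (fun i => b i * y j) ≤ 26 / 7 ∧
      pmepr L (fun i => -(a i * star (y (N - 1 - j)))) ≤ 26 / 7 ∧
      pmepr L (fun i => b i * star (x (N - 1 - j))) ≤ 26 / 7 := by
  intro j hj
  set K : ℕ := 2 ^ (n + 1) with hKdef
  have hK2 : (2 : ℕ) ≤ K := by
    rw [hKdef]
    calc (2:ℕ) = 2 ^ 1 := by norm_num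
    _ ≤ 2 ^ (n + 1) := Nat.pow_le_pow_right (by norm_num) (by omega)
  have hn3 : 2 ^ (n + 3) = 4 * K := by rw [hKdef]; ring
  have hn2 : 2 ^ (n + 2) = 2 * K := by rw [hKdef]; ring
  have hLK : L = 7 * K := by rw [hL, hn3, hn2, hKdef]; ring
  have hz3 : (2 : ℤ) ^ (n + 3) = 4 * (K : ℤ) := by rw [hKdef]; push_cast; ring
  have hz1 : (2 : ℤ) ^ (n + 1) = (K : ℤ) := by rw [hKdef]; push_cast; ring
  -- the autocorrelation sum bound
  have hC : ∑ τ ∈ Finset.Icc 1 (L - 1),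
      ‖acorr L a (τ : ℤ) + acorr L b (τ : ℤ)‖ ≤ 3 * (2 : ℝ) ^ (n + 2) := by
    have hsub : ({4 * K, 5 * K, 6 * K} : Finset ℕ) ⊆ Finset.Icc 1 (L - 1) := by
      intro τ hτ
      simp only [Finset.mem_insert, Finset.mem_singleton] at hτ
      simp only [Finset.mem_Icc]
      rcases hτ with h | h | h <;> omega
    calc ∑ τ ∈ Finset.Icc 1 (L - 1), ‖acorr L a (τ : ℤ) + acorr L b (τ : ℤ)‖
        ≤ ∑ τ ∈ Finset.Icc 1 (L - 1),
            (if τ ∈ ({4 * K, 5 * K, 6 * K} : Finset ℕ) then ((2 : ℝ) ^ (n + 2)) else 0) := by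
          apply Finset.sum_le_sum
          intro τ hτ
          simp only [Finset.mem_Icc] at hτ
          by_cases hm : τ ∈ ({4 * K, 5 * K, 6 * K} : Finset ℕ)
          · rw [if_pos hm]
            simp only [Finset.mem_insert, Finset.mem_singleton] at hm
            rcases hm with h | h | h
            · have hp := hpeak 0 (by norm_num) (by norm_num)
              rw [show ((2 : ℤ) ^ (n + 3) + 0 * 2 ^ (n + 1)) = ((τ : ℕ) : ℤ) from by
                rw [hz3]; omega] at hp
              exact hp
            · have hp := hpeak 1 (by norm_num) (by norm_num)
              rw [show ((2 : ℤ) ^ (n + 3) + 1 * 2 ^ (n + 1)) = ((τ : ℕ) : ℤ) from by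
                rw [hz3, hz1]; omega] at hp
              exact hp
            · have hp := hpeak 2 (by norm_num) (by norm_num)
              rw [show ((2 : ℤ) ^ (n + 3) + 2 * 2 ^ (n + 1)) = ((τ : ℕ) : ℤ) from by
                rw [hz3, hz1]; omega] at hp
              exact hp
          · rw [if_neg hm]
            simp only [Finset.mem_insert, Finset.mem_singleton, not_or] at hm
            have h0 := hzero (τ : ℤ) (by exact_mod_cast hτ.1) (by omega) ?_
            · rw [h0]
              simp
            · intro l hl0 hl2
              have hl : l = 0 ∨ l = 1 ∨ l = 2 := by omega
              rcases hl with rfl | rfl | rfl <;> rw [hz3, hz1] <;> omega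
      _ = 3 * (2 : ℝ) ^ (n + 2) := by
          rw [Finset.sum_ite_mem, Finset.inter_eq_right.mpr hsub]
          rw [Finset.sum_insert (by simp; omega), Finset.sum_insert (by simp; omega),
            Finset.sum_singleton]
          ring
  -- pointwise power bound
  have hKR : (0 : ℝ) < (K : ℝ) := by positivity
  have hbound : ∀ t : ℝ,
      (‖∑ i ∈ range L, a i * Complex.exp (2 * Real.pi * Complex.I * (i : ℂ) * (t : ℂ))‖) ^ 2 +
      (‖∑ i ∈ range L, b i * Complex.exp (2 * Real.pi * Complex.I * (i : ℂ) * (t : ℂ))‖) ^ 2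
        ≤ 26 * (K : ℝ) := by
    intro t
    have h := key_bound L a b ha hb (3 * (2 : ℝ) ^ (n + 2)) hC t
    have hLr : (L : ℝ) = 7 * (K : ℝ) := by rw [hLK]; push_cast; ring
    have h2r : ((2 : ℝ)) ^ (n + 2) = 2 * (K : ℝ) := by rw [hKdef]; push_cast; ring
    rw [hLr, h2r] at h
    linarith
  -- generic pmepr bound for multiples of a and b
  have hmain : ∀ (c : ℕ → ℂ),
      (∀ t : ℝ, (‖∑ i ∈ range L,
          c i * Complex.exp (2 * Real.pi * Complex.I * (i : ℂ) * (t : ℂ))‖) ^ 2 ≤ 26 * (K : ℝ)) →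
        pmepr L c ≤ 26 / 7 := by
    intro c h
    have hne : Nonempty (Set.Icc (0 : ℝ) 1) := ⟨⟨0, by norm_num⟩⟩
    apply ciSup_le
    intro t
    have hLr : (L : ℝ) = 7 * (K : ℝ) := by rw [hLK]; push_cast; ring
    have h267 : 26 * (K : ℝ) / (L : ℝ) = 26 / 7 := by
      rw [hLr]; field_simp
    rw [← h267]
    gcongr
    exact h (t : ℝ)
  -- reduce each column to a or b
  have hfac : ∀ (d : ℕ → ℂ) (u : ℂ) (t : ℝ),
      ∑ i ∈ range L, (d i * u) * Complex.exp (2 * Real.pi * Complex.I * (i : ℂ) * (t : ℂ)) =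
        u * ∑ i ∈ range L, d i * Complex.exp (2 * Real.pi * Complex.I * (i : ℂ) * (t : ℂ)) := by
    intro d u t
    rw [Finset.mul_sum]
    apply Finset.sum_congr rfl
    intro i _
    ring
  have habs : ∀ (d : ℕ → ℂ) (u : ℂ), ‖u‖ = 1 →
      (∀ t : ℝ, (‖∑ i ∈ range L,
          d i * Complex.exp (2 * Real.pi * Complex.I * (i : ℂ) * (t : ℂ))‖) ^ 2 ≤ 26 * (K : ℝ)) →
      ∀ t : ℝ, (‖∑ i ∈ range L,
          (d i * u) * Complex.exp (2 * Real.pi * Complex.I * (i : ℂ) * (t : ℂ))‖) ^ 2 ≤ 26 * (K : ℝ) := by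
    intro d u hu hd t
    rw [hfac d u t, norm_mul, hu, one_mul]
    exact hd t
  have hNpos : 0 < N := by omega
  have hN1j : N - 1 - j < N := by omega
  have hya : ‖star (y (N - 1 - j))‖ = 1 := by
    rw [Complex.star_def, Complex.norm_conj]
    exact hy _ hN1j
  have hxa : ‖star (x (N - 1 - j))‖ = 1 := by
    rw [Complex.star_def, Complex.norm_conj]
    exact hx _ hN1j
  have hA : ∀ t : ℝ, (‖∑ i ∈ range L,
      a i * Complex.exp (2 * Real.pi * Complex.I * (i : ℂ) * (t : ℂ))‖) ^ 2 ≤ 26 * (K : ℝ) := by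
    intro t
    have := hbound t
    have h2 : (0:ℝ) ≤ (‖∑ i ∈ range L,
      b i * Complex.exp (2 * Real.pi * Complex.I * (i : ℂ) * (t : ℂ))‖) ^ 2 := by positivity
    linarith
  have hB : ∀ t : ℝ, (‖∑ i ∈ range L,
      b i * Complex.exp (2 * Real.pi * Complex.I * (i : ℂ) * (t : ℂ))‖) ^ 2 ≤ 26 * (K : ℝ) := by
    intro t
    have := hbound t
    have h2 : (0:ℝ) ≤ (‖∑ i ∈ range L,
      a i * Complex.exp (2 * Real.pi * Complex.I * (i : ℂ) * (t : ℂ))‖) ^ 2 := by positivity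
    linarith
  refine ⟨?_, ?_, ?_, ?_⟩
  · exact hmain _ (habs a (x j) (hx j hj) hA)
  · exact hmain _ (habs b (y j) (hy j hj) hB)
  · apply hmain
    intro t
    have h1 : ∑ i ∈ range L, (-(a i * star (y (N - 1 - j)))) *
        Complex.exp (2 * Real.pi * Complex.I * (i : ℂ) * (t : ℂ)) =
        ∑ i ∈ range L, (a i * (-star (y (N - 1 - j)))) *
        Complex.exp (2 * Real.pi * Complex.I * (i : ℂ) * (t : ℂ)) := by
      apply Finset.sum_congr rfl
      intro i _
      ring
    rw [h1]
    have hu : ‖-star (y (N - 1 - j))‖ = 1 := by rw [norm_neg]; exact hya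
    exact habs a _ hu hA t
  · exact hmain _ (habs b (star (x (N - 1 - j))) hxa hB)

end
end
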